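/- For every real κ with 0 < κ < 1, every complex root z of the quartic polynomial z⁴ − (2/κ + 2)z³ + ((7+12κ)/(4κ²) + 1)z² − ((κ + 4(1−κ)²)/(4κ³))z + (1−κ)²/(4κ⁴) has strictly positive real part. -/

import Mathlib

set_option maxHeartbeats 1600000 in
/-- All roots of the transition-point quartic lie in the open right half-plane. -/
theorem quartic_roots_positive_real_part
    (κ : ℝ) (h0 : 0 < κ) (h1 : κ < 1) (z : ℂ)
    (hz : z ^ 4 - (2 / (κ : ℂ) + 2) * z ^ 3
        + ((7 + 12 * (κ : ℂ)) / (4 * (κ : ℂ) ^ 2) + 1) * z ^ 2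
        - (((κ : ℂ) + 4 * (1 - (κ : ℂ)) ^ 2) / (4 * (κ : ℂ) ^ 3)) * z
        + (1 - (κ : ℂ)) ^ 2 / (4 * (κ : ℂ) ^ 4) = 0) :
    0 < z.re := by
  have hk : (κ : ℂ) ≠ 0 := by exact_mod_cast h0.ne'
  -- clear denominators
  have hP : 4*(κ:ℂ)^4*z^4 - (8*(κ:ℂ)^3+8*(κ:ℂ)^4)*z^3
      + (7*(κ:ℂ)^2+12*(κ:ℂ)^3+4*(κ:ℂ)^4)*z^2
      - (4*(κ:ℂ)^3-7*(κ:ℂ)^2+4*(κ:ℂ))*z + (1-(κ:ℂ))^2 = 0 := by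
    have hd : (κ:ℂ) * (4 * (κ:ℂ) ^ 2) * (4 * (κ:ℂ) ^ 3) ≠ 0 := by simp [hk]
    field_simp at hz
    apply mul_left_cancel₀ (show (16:ℂ)*(κ:ℂ)^6 ≠ 0 from by simp [hk])
    rw [mul_zero]
    linear_combination (16*(κ:ℂ)^6) * hz
  set x := z.re with hx
  set y := z.im with hy
  rw [← Complex.re_add_im z] at hP
  have hr := congrArg Complex.re hP
  have hi := congrArg Complex.im hP
  simp only [Complex.add_re, Complex.sub_re, Complex.mul_re, Complex.mul_im,
    Complex.add_im, Complex.sub_im, Complex.ofReal_re, Complex.ofReal_im,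
    Complex.I_re, Complex.I_im, Complex.zero_re, Complex.zero_im,
    Complex.one_re, Complex.one_im, Complex.re_ofNat, Complex.im_ofNat,
    pow_succ, pow_zero, one_mul] at hr hi
  -- real and imaginary parts
  have hE1 : 4*κ^4*(x^4-6*x^2*y^2+y^4) - (8*κ^3+8*κ^4)*(x^3-3*x*y^2)
      + (7*κ^2+12*κ^3+4*κ^4)*(x^2-y^2) - (4*κ^3-7*κ^2+4*κ)*x + (1-κ)^2 = 0 := by
    linear_combination hr
  have hE2 : y * (16*κ^4*(x^3 - x*y^2) - (8*κ^3+8*κ^4)*(3*x^2-y^2)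
      + 2*(7*κ^2+12*κ^3+4*κ^4)*x - (4*κ^3-7*κ^2+4*κ)) = 0 := by
    linear_combination hi
  by_contra hcon
  push_neg at hcon
  -- hcon : x ≤ 0
  have ha1 : 0 < 4*κ^3-7*κ^2+4*κ := by nlinarith [sq_nonneg (2*κ-2), h0]
  rcases mul_eq_zero.mp hE2 with hy0 | hin
  · -- real root case
    have hq : 4*κ^4*x^4 - (8*κ^3+8*κ^4)*x^3 + (7*κ^2+12*κ^3+4*κ^4)*x^2
        - (4*κ^3-7*κ^2+4*κ)*x + (1-κ)^2 = 0 := by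
      rw [hy0] at hE1; linear_combination hE1
    have c4 : 0 ≤ 4*κ^4*x^4 := by positivity
    have hx3 : x^3 ≤ 0 := Odd.pow_nonpos ⟨1, by norm_num⟩ hcon
    have hx5 : x^5 ≤ 0 := Odd.pow_nonpos ⟨2, by norm_num⟩ hcon
    have c3 : (8*κ^3+8*κ^4)*x^3 ≤ 0 :=
      mul_nonpos_iff.mpr (Or.inl ⟨by positivity, hx3⟩)
    have c2 : 0 ≤ (7*κ^2+12*κ^3+4*κ^4)*x^2 := by positivity
    have c1 : (4*κ^3-7*κ^2+4*κ)*x ≤ 0 :=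
      mul_nonpos_iff.mpr (Or.inl ⟨ha1.le, hcon⟩)
    have c0 : 0 < (1-κ)^2 := pow_pos (by linarith) 2
    linarith
  · -- complex root case: y^2 * D = Nx
    have key : (-4096*κ^12)*x^6 + (12288*κ^11+12288*κ^12)*x^5
        + (-15872*κ^10-30720*κ^11-14336*κ^12)*x^4
        + (11264*κ^9+31744*κ^10+28672*κ^11+8192*κ^12)*x^3
        + (-4624*κ^8-16128*κ^9-20480*κ^10-12288*κ^11-2304*κ^12)*x^2
        + (1040*κ^7+3856*κ^8+5376*κ^9+4608*κ^10+2304*κ^11+256*κ^12)*x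
        + κ^6*(-96-440*κ+524*κ^2-64*κ^3-160*κ^4-128*κ^5) = 0 := by
      linear_combination (8*κ^3+8*κ^4 - 16*κ^4*x)^2 * hE1
        - (4*κ^4*(((4*κ^3-7*κ^2+4*κ) - 2*(7*κ^2+12*κ^3+4*κ^4)*x
              + 3*(8*κ^3+8*κ^4)*x^2 - 16*κ^4*x^3)
            + y^2*(8*κ^3+8*κ^4 - 16*κ^4*x))
          - (24*κ^4*x^2 - (24*κ^3+24*κ^4)*x + (7*κ^2+12*κ^3+4*κ^4))
            * (8*κ^3+8*κ^4 - 16*κ^4*x)) * hin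
    have t6 : 0 ≤ 4096*κ^12*x^6 := by positivity
    have hx3 : x^3 ≤ 0 := Odd.pow_nonpos ⟨1, by norm_num⟩ hcon
    have hx5 : x^5 ≤ 0 := Odd.pow_nonpos ⟨2, by norm_num⟩ hcon
    have t5 : (12288*κ^11+12288*κ^12)*x^5 ≤ 0 :=
      mul_nonpos_iff.mpr (Or.inl ⟨by positivity, hx5⟩)
    have t4 : 0 ≤ (15872*κ^10+30720*κ^11+14336*κ^12)*x^4 := by positivity
    have t3 : (11264*κ^9+31744*κ^10+28672*κ^11+8192*κ^12)*x^3 ≤ 0 :=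
      mul_nonpos_iff.mpr (Or.inl ⟨by positivity, hx3⟩)
    have t2 : 0 ≤ (4624*κ^8+16128*κ^9+20480*κ^10+12288*κ^11+2304*κ^12)*x^2 := by positivity
    have t1 : (1040*κ^7+3856*κ^8+5376*κ^9+4608*κ^10+2304*κ^11+256*κ^12)*x ≤ 0 :=
      mul_nonpos_iff.mpr (Or.inl ⟨by positivity, hcon⟩)
    have t0 : κ^6*(-96-440*κ+524*κ^2-64*κ^3-160*κ^4-128*κ^5) < 0 := by
      have hneg : -96-440*κ+524*κ^2-64*κ^3-160*κ^4-128*κ^5 < 0 := by nlinarith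
      exact mul_neg_of_pos_of_neg (by positivity) hneg
    linarith
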